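/- For γ > 1/2 and ρ ≥ 1 with ργ < 1, the quantity σ²(γ,ρ) = γ² + γ²ρ(ρ - 2ργ² + 2γ)/(γρ-1)² + 2γ²/((ρ+γρ-1)(ρ+2γρ-2)) + 2γ/(2γ-1) - 2γρ(ργ² - ργ + 1)/((γρ-1)(ρ+γρ-1)) is strictly positive. -/
import Mathlib


/-- Positivity of the asymptotic variance `σ²(γ,ρ)` of the robust distortion-premium
estimator, for `1/2 < γ`, `ρ ≥ 1`, `ργ < 1`. -/
theorem stmt16 (γ ρ : ℝ) (hγ : 1/2 < γ) (hρ : 1 ≤ ρ) (hργ : ρ * γ < 1) :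
    0 < γ ^ 2 + γ ^ 2 * ρ * (ρ - 2 * ρ * γ ^ 2 + 2 * γ) / (γ * ρ - 1) ^ 2
        + 2 * γ ^ 2 / ((ρ + γ * ρ - 1) * (ρ + 2 * γ * ρ - 2))
        + 2 * γ / (2 * γ - 1)
        - 2 * γ * ρ * (ρ * γ ^ 2 - ρ * γ + 1) / ((γ * ρ - 1) * (ρ + γ * ρ - 1)) := by
  have hγ0 : 0 < γ := by linarith
  have hρ0 : 0 < ρ := by linarith
  have hγ1 : γ < 1 := by nlinarith
  have hd1 : γ * ρ - 1 < 0 := by nlinarith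
  have hd2 : 0 < ρ + γ * ρ - 1 := by nlinarith
  have hd3 : 0 < ρ + 2 * γ * ρ - 2 := by nlinarith
  have hd4 : 0 < 2 * γ - 1 := by linarith
  have hnum2 : 0 < ρ - 2 * ρ * γ ^ 2 + 2 * γ := by
    rcases le_or_gt (2 * γ ^ 2) 1 with h | h
    · nlinarith
    · nlinarith [mul_pos hγ0 hγ0]
  have hnum5 : 0 < ρ * γ ^ 2 - ρ * γ + 1 := by nlinarith [mul_pos hρ0 hγ0]
  have t1 : 0 < γ ^ 2 := by positivity
  have t2 : 0 < γ ^ 2 * ρ * (ρ - 2 * ρ * γ ^ 2 + 2 * γ) / (γ * ρ - 1) ^ 2 := by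
    apply div_pos
    · exact mul_pos (by positivity) hnum2
    · exact pow_two_pos_of_ne_zero (ne_of_lt hd1)
  have t3 : 0 < 2 * γ ^ 2 / ((ρ + γ * ρ - 1) * (ρ + 2 * γ * ρ - 2)) := by
    apply div_pos
    · positivity
    · exact mul_pos hd2 hd3
  have t4 : 0 < 2 * γ / (2 * γ - 1) := div_pos (by linarith) hd4
  have t5 : 2 * γ * ρ * (ρ * γ ^ 2 - ρ * γ + 1) / ((γ * ρ - 1) * (ρ + γ * ρ - 1)) < 0 := by
    apply div_neg_of_pos_of_neg
    · exact mul_pos (by positivity) hnum5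
    · exact mul_neg_of_neg_of_pos hd1 hd2
  linarith
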